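/- Let F be a finite family of self-maps of a space X and d a pseudometric on X. Suppose for some m ∈ ℕ and λ < 1 one has dω_{F^m}(t) ≤ λ·t for all t ≥ 0 (F^m is Banach contracting with constant λ). Choose a > 1 with a^m λ < 1 and define d̂(x,y) = sup_{n∈ω} sup_{f∈F^n} a^n d(f(x),f(y)). Then d̂ is a well-defined pseudometric satisfying d̂ ≥ d, and every f ∈ F is Banach contracting with respect to d̂ with constant 1/a: d̂(f(x),f(y)) ≤ (1/a)·d̂(x,y) for all x,y ∈ X. -/

import Mathlib

open Filter Topology ENNReal

/-- The set `F^n` of all compositions of `n` members of a family `F` of self-maps. -/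
def comps {X : Type*} (F : Set (X → X)) : ℕ → Set (X → X)
  | 0 => {id}
  | n + 1 => Set.image2 (· ∘ ·) (comps F n) F

/-- The oscillation of a family `G` of self-maps with respect to a pseudometric `d`. -/
noncomputable def oscFam {X : Type*} (d : X → X → ℝ≥0∞) (G : Set (X → X)) (t : ℝ≥0∞) :
    ℝ≥0∞ :=
  ⨆ g ∈ G, ⨆ (x : X) (y : X) (_ : d x y ≤ t), d (g x) (g y)

lemma comps_comp {X : Type*} (F : Set (X → X)) {j k : ℕ}
    {g h : X → X} (hg : g ∈ comps F j) (hh : h ∈ comps F k) :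
    g ∘ h ∈ comps F (j + k) := by
  induction k generalizing h with
  | zero =>
    simp only [comps, Set.mem_singleton_iff] at hh
    subst hh
    simpa using hg
  | succ k ih =>
    rcases hh with ⟨h1, hh1, f, hf, rfl⟩
    have h2 : (g ∘ h1) ∘ f ∈ comps F ((j + k) + 1) :=
      Set.mem_image2_of_mem (ih hh1) hf
    exact h2

lemma comps_decomp {X : Type*} (F : Set (X → X)) {j k : ℕ}
    {f : X → X} (hf : f ∈ comps F (j + k)) :
    ∃ g ∈ comps F j, ∃ h ∈ comps F k, f = g ∘ h := by
  induction k generalizing f with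
  | zero =>
    exact ⟨f, hf, id, rfl, rfl⟩
  | succ k ih =>
    rcases hf with ⟨f1, hf1, f2, hf2, rfl⟩
    rcases ih hf1 with ⟨g, hg, h, hh, rfl⟩
    exact ⟨g, hg, h ∘ f2, Set.mem_image2_of_mem hh hf2, rfl⟩

/-- If `F^m` is Banach contracting with constant `λ < 1` for a bounded pseudometric `d`,
and `a > 1` satisfies `a^m * λ < 1`, then `d̂(x,y) = sup_n sup_{f ∈ F^n} a^n d(f x, f y)` is a
well-defined pseudometric with `d̂ ≥ d`, and every `f ∈ F` is Banach contracting with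
constant `1/a` with respect to `d̂`. -/
theorem dhat_banach {X : Type*} (d : X → X → ℝ≥0∞)
    (hrefl : ∀ x, d x x = 0) (hsymm : ∀ x y, d x y = d y x)
    (htri : ∀ x y z, d x z ≤ d x y + d y z)
    (hbd : ∃ C : ℝ≥0∞, C ≠ ⊤ ∧ ∀ x y, d x y ≤ C)
    (F : Set (X → X)) (hfin : F.Finite)
    (m : ℕ) (lam : ℝ≥0∞) (hlam : lam < 1)
    (hosc : ∀ t : ℝ≥0∞, oscFam d (comps F m) t ≤ lam * t)
    (a : ℝ≥0∞) (ha1 : 1 < a) (hatop : a ≠ ⊤) (ham : a ^ m * lam < 1) :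
    let dhat : X → X → ℝ≥0∞ := fun x y => ⨆ n, ⨆ f ∈ comps F n, a ^ n * d (f x) (f y)
    (∀ x y : X, d x y ≤ dhat x y) ∧
    (∀ x y : X, dhat x y ≠ ⊤) ∧
    (∀ x : X, dhat x x = 0) ∧
    (∀ x y : X, dhat x y = dhat y x) ∧
    (∀ x y z : X, dhat x z ≤ dhat x y + dhat y z) ∧
    (∀ f ∈ F, ∀ x y : X, dhat (f x) (f y) ≤ a⁻¹ * dhat x y) := by
  intro dhat
  obtain ⟨C, hCtop, hC⟩ := hbd
  have ha0 : a ≠ 0 := (zero_lt_one.trans ha1).ne'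
  -- d (g x) (g y) ≤ lam * d x y for g ∈ comps F m
  have hstep : ∀ g ∈ comps F m, ∀ x y, d (g x) (g y) ≤ lam * d x y := by
    intro g hg x y
    refine le_trans ?_ (hosc (d x y))
    unfold oscFam
    exact le_iSup₂_of_le g hg (le_iSup₂_of_le x y (le_iSup_of_le le_rfl le_rfl))
  -- iterated contraction
  have hcontract : ∀ q : ℕ, ∀ g ∈ comps F (m * q), ∀ x y,
      d (g x) (g y) ≤ lam ^ q * d x y := by
    intro q
    induction q with
    | zero =>
      intro g hg x y
      simp only [Nat.mul_zero, comps, Set.mem_singleton_iff] at hg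
      subst hg
      simp
    | succ q ih =>
      intro g hg x y
      have : g ∈ comps F (m * q + m) := by
        rwa [Nat.mul_succ] at hg
      rcases comps_decomp F this with ⟨g1, hg1, g2, hg2, rfl⟩
      calc d ((g1 ∘ g2) x) ((g1 ∘ g2) y) ≤ lam ^ q * d (g2 x) (g2 y) := ih g1 hg1 _ _
        _ ≤ lam ^ q * (lam * d x y) := mul_le_mul_right (hstep g2 hg2 x y) _
        _ = lam ^ (q + 1) * d x y := by rw [pow_succ]; ring
  -- m = 0 forces d = 0
  have hm0 : m = 0 → ∀ x y, d x y = 0 := by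
    intro hm x y
    by_contra h0
    have hxy : d x y ≤ lam * d x y := by
      subst hm
      exact hstep id rfl x y
    have : lam * d x y < 1 * d x y :=
      by rw [mul_comm lam, mul_comm 1]; exact ENNReal.mul_lt_mul_right h0 ((hC x y).trans_lt hCtop.lt_top).ne hlam
    rw [one_mul] at this
    exact absurd (hxy.trans_lt this) (lt_irrefl _)
  -- key bound
  have hkey : ∀ n : ℕ, ∀ f ∈ comps F n, ∀ x y,
      a ^ n * d (f x) (f y) ≤ a ^ m * C := by
    intro n f hf x y
    rcases Nat.eq_zero_or_pos m with hm | hm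
    · rw [hm0 hm, mul_zero]
      exact zero_le
    · have hn : m * (n / m) + n % m = n := Nat.div_add_mod n m
      rcases comps_decomp F (hn ▸ hf) with ⟨g, hg, h, hh, hfgh⟩
      calc a ^ n * d (f x) (f y)
          = (a ^ m) ^ (n / m) * a ^ (n % m) * d (g (h x)) (g (h y)) := by
            rw [hfgh, ← pow_mul, ← pow_add, hn]; rfl
        _ ≤ (a ^ m) ^ (n / m) * a ^ (n % m) * (lam ^ (n / m) * d (h x) (h y)) :=
            mul_le_mul_right (hcontract _ g hg _ _) _
        _ ≤ (a ^ m) ^ (n / m) * a ^ (n % m) * (lam ^ (n / m) * C) :=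
            mul_le_mul_right (mul_le_mul_right (hC _ _) _) _
        _ = (a ^ m * lam) ^ (n / m) * (a ^ (n % m) * C) := by
            rw [mul_pow]; ring
        _ ≤ 1 * (a ^ m * C) := by
            gcongr
            · exact pow_le_one' ham.le _
            · exact ha1.le
            · exact (Nat.mod_lt n hm).le
        _ = a ^ m * C := one_mul _
  have hle : ∀ n : ℕ, ∀ f ∈ comps F n, ∀ x y,
      a ^ n * d (f x) (f y) ≤ dhat x y := by
    intro n f hf x y
    exact le_iSup_of_le n (le_iSup₂_of_le f hf le_rfl)
  have hid1 : ∀ x y : X, d x y ≤ dhat x y := by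
    intro x y
    have := hle 0 id rfl x y
    simpa using this
  refine ⟨hid1, ?_, ?_, ?_, ?_, ?_⟩
  · -- finiteness
    intro x y
    have hbound : dhat x y ≤ a ^ m * C := by
      refine iSup_le fun n => iSup₂_le fun f hf => hkey n f hf x y
    exact (hbound.trans_lt (ENNReal.mul_lt_top (ENNReal.pow_lt_top hatop.lt_top) hCtop.lt_top)).ne
  · intro x
    refine le_antisymm ?_ zero_le
    refine iSup_le fun n => iSup₂_le fun f hf => ?_
    rw [hrefl, mul_zero]
  · intro x y
    simp only [dhat]
    congr 1
    ext n
    congr 1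
    ext f
    congr 1
    ext hf
    rw [hsymm]
  · intro x y z
    refine iSup_le fun n => iSup₂_le fun f hf => ?_
    calc a ^ n * d (f x) (f z) ≤ a ^ n * (d (f x) (f y) + d (f y) (f z)) :=
          mul_le_mul_right (htri _ _ _) _
      _ = a ^ n * d (f x) (f y) + a ^ n * d (f y) (f z) := by rw [mul_add]
      _ ≤ dhat x y + dhat y z := add_le_add (hle n f hf x y) (hle n f hf y z)
  · intro f hf x y
    refine iSup_le fun n => iSup₂_le fun g hg => ?_
    have hfc : f ∈ comps F 1 := by
      have : (id : X → X) ∘ f ∈ comps F 1 := Set.mem_image2_of_mem rfl hf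
      simpa using this
    have hgf : g ∘ f ∈ comps F (n + 1) := comps_comp F hg hfc
    have heq : a ^ n * d (g (f x)) (g (f y))
        = a⁻¹ * (a ^ (n + 1) * d ((g ∘ f) x) ((g ∘ f) y)) := by
      rw [pow_succ, ← mul_assoc, ← mul_assoc]
      congr 2
      rw [mul_comm a⁻¹, mul_assoc, ENNReal.inv_mul_cancel ha0 hatop, mul_one]
    rw [heq]
    exact mul_le_mul_right (hle (n + 1) (g ∘ f) hgf x y) _
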